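/- For every normed space V and every subgroup G of the group of linear surjective isometries of V with the strong operator topology, the dual action of G on the weak-star compact unit ball B_{V*}, given by (g·φ)(v) = φ(g⁻¹v), is jointly continuous. -/

import Mathlib

noncomputable section

def dualAct {G V : Type*} [Group G] [NormedAddCommGroup V] [NormedSpace ℝ V]
    (π : G →* (V ≃ₗᵢ[ℝ] V)) (g : G) (φ : WeakDual ℝ V) : WeakDual ℝ V :=
  ContinuousLinearMap.comp (φ : V →L[ℝ] ℝ)
    ((π g⁻¹).toContinuousLinearEquiv : V →L[ℝ] V)

theorem dual_action_continuous {G V : Type*} [Group G] [TopologicalSpace G]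
    [IsTopologicalGroup G] [NormedAddCommGroup V] [NormedSpace ℝ V]
    (π : G →* (V ≃ₗᵢ[ℝ] V)) (hπ : ∀ v : V, Continuous fun g : G => π g v) :
    (∀ (g : G) (φ : WeakDual ℝ V), (∀ v : V, |φ v| ≤ ‖v‖) →
        ∀ v : V, |dualAct π g φ v| ≤ ‖v‖) ∧
      Continuous (fun p :
          G × {φ : WeakDual ℝ V // ∀ v : V, |φ.1 v| ≤ ‖v‖} =>
        dualAct π p.1 p.2.1) := by
  have hval : ∀ (g : G) (φ : WeakDual ℝ V) (v : V),
      dualAct π g φ v = φ (π g⁻¹ v) := fun g φ v => rfl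
  constructor
  · intro g φ hφ v
    rw [hval]
    calc |φ (π g⁻¹ v)| ≤ ‖(π g⁻¹ v : V)‖ := hφ _
      _ = ‖v‖ := (π g⁻¹).norm_map v
  · apply WeakDual.continuous_of_continuous_eval
    intro v
    simp only [hval]
    rw [continuous_iff_continuousAt]
    rintro ⟨g₀, φ₀⟩
    have heq : (fun p : G × {φ : WeakDual ℝ V // ∀ v : V, |φ.1 v| ≤ ‖v‖} =>
        p.2.1 (π p.1⁻¹ v))
        = fun p : G × {φ : WeakDual ℝ V // ∀ v : V, |φ.1 v| ≤ ‖v‖} =>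
          p.2.1 (π p.1⁻¹ v - π g₀⁻¹ v) + p.2.1 (π g₀⁻¹ v) := by
      funext p
      rw [map_sub]
      ring
    rw [heq]
    have h2 : ContinuousAt (fun p : G × {φ : WeakDual ℝ V // ∀ v : V, |φ.1 v| ≤ ‖v‖} =>
        p.2.1 (π g₀⁻¹ v)) (g₀, φ₀) :=
      ((WeakDual.eval_continuous (π g₀⁻¹ v)).comp
        (continuous_subtype_val.comp continuous_snd)).continuousAt
    have h1 : ContinuousAt (fun p : G × {φ : WeakDual ℝ V // ∀ v : V, |φ.1 v| ≤ ‖v‖} =>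
        p.2.1 (π p.1⁻¹ v - π g₀⁻¹ v)) (g₀, φ₀) := by
      have hb : Filter.Tendsto (fun p : G × {φ : WeakDual ℝ V // ∀ v : V, |φ.1 v| ≤ ‖v‖} =>
          ‖π p.1⁻¹ v - π g₀⁻¹ v‖) (nhds (g₀, φ₀)) (nhds 0) := by
        have : Continuous (fun p : G × {φ : WeakDual ℝ V // ∀ v : V, |φ.1 v| ≤ ‖v‖} =>
            ‖π p.1⁻¹ v - π g₀⁻¹ v‖) := by
          exact (((hπ v).comp (continuous_inv.comp continuous_fst)).sub
            continuous_const).norm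
        have h := this.continuousAt (x := (g₀, φ₀))
        unfold ContinuousAt at h
        simpa using h
      have := squeeze_zero_norm (f := fun p : G × {φ : WeakDual ℝ V // ∀ v : V, |φ.1 v| ≤ ‖v‖} =>
          p.2.1 (π p.1⁻¹ v - π g₀⁻¹ v))
          (fun p => by rw [Real.norm_eq_abs]; exact p.2.2 (π p.1⁻¹ v - π g₀⁻¹ v)) hb
      unfold ContinuousAt
      simpa using this
    have := h1.add h2
    simpa [Pi.add_def] using this
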